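/- Suppose Ã ∈ ℝ^{n×n} and Δ ∈ ℝ^{R×R} are row-stochastic, Δ has at least one entrywise strictly positive column, wᵀΔ = wᵀ for a probability vector w, and α_i ∈ (0,1) for all i. Let P* ∈ ℝ^{n×R} have every row equal to wᵀ. Then f(X) = diag(α) Ã X + (I - diag(α)) X Δ satisfies ‖f(X) - P*‖_∞ ≤ ε ‖X - P*‖_∞ for all X ∈ S_{nR}(1_n), where ε = max_i (α_i + (1-α_i)ζ(Δ)) < 1 and ζ(Δ) = 1 - Σ_r min_s δ_{sr}. In particular P* is the unique fixed point of f in S_{nR}(1_n). -/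
import Mathlib


/-- The social-self NCPM map `f(X) = diag(α) Ã X + (I - diag(α)) X Δ`. -/
noncomputable def ncpmF {n R : ℕ} (α : Fin n → ℝ) (Atil : Matrix (Fin n) (Fin n) ℝ)
    (Δ : Matrix (Fin R) (Fin R) ℝ) (X : Matrix (Fin n) (Fin R) ℝ) :
    Matrix (Fin n) (Fin R) ℝ :=
  Matrix.diagonal α * Atil * X + (1 - Matrix.diagonal α) * X * Δ

/-- Max absolute row sum (induced ∞-norm). -/
noncomputable def normInf {n R : ℕ} (M : Matrix (Fin n) (Fin R) ℝ) : ℝ :=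
  ⨆ i, ∑ r, |M i r|

theorem stmt_3 (n R : ℕ) (α : Fin n → ℝ) (hα : ∀ i, 0 < α i ∧ α i < 1)
    (Atil : Matrix (Fin n) (Fin n) ℝ) (Δ : Matrix (Fin R) (Fin R) ℝ)
    (hA0 : ∀ i j, 0 ≤ Atil i j) (hA1 : ∀ i, ∑ j, Atil i j = 1)
    (hAdiag : ∀ i, Atil i i = 0)
    (hΔ0 : ∀ r s, 0 ≤ Δ r s) (hΔ1 : ∀ r, ∑ s, Δ r s = 1)
    (hpos : ∃ r, ∀ s, 0 < Δ s r)
    (w : Fin R → ℝ) (hw0 : ∀ r, 0 ≤ w r) (hw1 : ∑ r, w r = 1)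
    (hwΔ : ∀ r, ∑ s, w s * Δ s r = w r)
    (Pstar : Matrix (Fin n) (Fin R) ℝ) (hPstar : ∀ i r, Pstar i r = w r) :
    (∀ X : Matrix (Fin n) (Fin R) ℝ, (∀ i r, 0 ≤ X i r) → (∀ i, ∑ r, X i r = 1) →
      normInf (ncpmF α Atil Δ X - Pstar) ≤
        (⨆ i, α i + (1 - α i) * (1 - ∑ r, ⨅ s, Δ s r)) * normInf (X - Pstar)) ∧
    (⨆ i, α i + (1 - α i) * (1 - ∑ r, ⨅ s, Δ s r)) < 1 ∧
    (∀ X : Matrix (Fin n) (Fin R) ℝ, (∀ i r, 0 ≤ X i r) → (∀ i, ∑ r, X i r = 1) →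
      ncpmF α Atil Δ X = X → X = Pstar) := by
  -- R is nonempty
  have hRpos : 0 < R := by
    by_contra h
    push_neg at h
    interval_cases R
    simp at hw1
  haveI hR : Nonempty (Fin R) := ⟨⟨0, hRpos⟩⟩
  set m : Fin R → ℝ := fun r => ⨅ s, Δ s r with hmdef
  have hm_le : ∀ r s, m r ≤ Δ s r := fun r s => ciInf_le (Finite.bddBelow_range _) s
  have hm0 : ∀ r, 0 ≤ m r := fun r => le_ciInf fun s => hΔ0 s r
  set ζ : ℝ := 1 - ∑ r, m r with hζdef
  have hζ0 : 0 ≤ ζ := by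
    obtain ⟨s⟩ := hR
    have h1 : ∑ r, m r ≤ ∑ r, Δ s r := Finset.sum_le_sum fun r _ => hm_le r s
    have := hΔ1 s
    simp only [hζdef]
    linarith
  have hζ1 : ζ < 1 := by
    obtain ⟨r₀, hr₀⟩ := hpos
    obtain ⟨s₀, hs₀min⟩ := Finite.exists_min fun s => Δ s r₀
    have hmr₀ : 0 < m r₀ := lt_of_lt_of_le (hr₀ s₀) (le_ciInf hs₀min)
    have hsum : 0 < ∑ r, m r :=
      Finset.sum_pos' (fun r _ => hm0 r) ⟨r₀, Finset.mem_univ _, hmr₀⟩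
    simp only [hζdef]
    linarith
  set ε : ℝ := ⨆ i, α i + (1 - α i) * ζ with hεdef
  -- the Dobrushin-type bound for zero-sum row vectors
  have key1 : ∀ e : Fin R → ℝ, (∑ s, e s = 0) →
      ∑ r, |∑ s, e s * Δ s r| ≤ ζ * ∑ s, |e s| := by
    intro e he
    have step : ∀ r, |∑ s, e s * Δ s r| ≤ ∑ s, |e s| * (Δ s r - m r) := by
      intro r
      have h1 : ∑ s, e s * Δ s r = ∑ s, e s * (Δ s r - m r) := by
        simp [mul_sub, Finset.sum_sub_distrib, ← Finset.sum_mul, he]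
      rw [h1]
      refine (Finset.abs_sum_le_sum_abs _ _).trans ?_
      refine Finset.sum_le_sum fun s _ => ?_
      rw [abs_mul, abs_of_nonneg (show (0:ℝ) ≤ Δ s r - m r by linarith [hm_le r s])]
    calc ∑ r, |∑ s, e s * Δ s r|
        ≤ ∑ r, ∑ s, |e s| * (Δ s r - m r) := Finset.sum_le_sum fun r _ => step r
      _ = ∑ s, |e s| * ζ := by
          rw [Finset.sum_comm]
          refine Finset.sum_congr rfl fun s _ => ?_
          rw [← Finset.mul_sum, Finset.sum_sub_distrib, hΔ1 s]
      _ = ζ * ∑ s, |e s| := by rw [← Finset.sum_mul, mul_comm]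
  -- entrywise formula for f(X) - Pstar
  have hentry : ∀ (X : Matrix (Fin n) (Fin R) ℝ), ∀ i r,
      (ncpmF α Atil Δ X - Pstar) i r =
        α i * (∑ j, Atil i j * (X j r - w r)) +
        (1 - α i) * (∑ s, (X i s - w s) * Δ s r) := by
    intro X i r
    have hd : (1 : Matrix (Fin n) (Fin n) ℝ) - Matrix.diagonal α
        = Matrix.diagonal (fun i => 1 - α i) := by
      ext a b
      by_cases h : a = b <;>
        simp [Matrix.sub_apply, Matrix.diagonal_apply, Matrix.one_apply, h]
    have e1 : ∑ j, Atil i j * (X j r - w r) = (∑ j, Atil i j * X j r) - w r := by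
      simp [mul_sub, Finset.sum_sub_distrib, ← Finset.sum_mul, hA1 i]
    have e2 : ∑ s, (X i s - w s) * Δ s r = (∑ s, X i s * Δ s r) - w r := by
      simp [sub_mul, Finset.sum_sub_distrib, hwΔ r]
    have lhs1 : (Matrix.diagonal α * Atil * X) i r = α i * ∑ j, Atil i j * X j r := by
      rw [Matrix.mul_assoc, Matrix.diagonal_mul, Matrix.mul_apply]
    have lhs2 : (((1 : Matrix (Fin n) (Fin n) ℝ) - Matrix.diagonal α) * X * Δ) i r
        = (1 - α i) * ∑ s, X i s * Δ s r := by
      rw [hd, Matrix.mul_assoc, Matrix.diagonal_mul, Matrix.mul_apply, Finset.mul_sum]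
    rw [Matrix.sub_apply, ncpmF, Matrix.add_apply, lhs1, lhs2, hPstar, e1, e2]
    ring
  -- handle n = 0
  rcases Nat.eq_zero_or_pos n with hn | hn
  · subst hn
    haveI : IsEmpty (Fin 0) := inferInstance
    refine ⟨?_, ?_, ?_⟩
    · intro X _ _
      rw [hεdef]
      simp [normInf, Real.iSup_of_isEmpty]
    · rw [hεdef, Real.iSup_of_isEmpty]; norm_num
    · intro X _ _ _
      ext i r
      exact i.elim0
  haveI hNn : Nonempty (Fin n) := ⟨⟨0, hn⟩⟩
  have hεge : ∀ i, α i + (1 - α i) * ζ ≤ ε := by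
    intro i
    rw [hεdef]
    exact le_ciSup (f := fun i => α i + (1 - α i) * ζ) (Finite.bddAbove_range _) i
  have hε1 : ε < 1 := by
    obtain ⟨i₀, hi₀⟩ := Finite.exists_max fun i => α i + (1 - α i) * ζ
    have h1 : ε ≤ α i₀ + (1 - α i₀) * ζ := by
      rw [hεdef]
      exact ciSup_le fun i => hi₀ i
    have h2 : α i₀ + (1 - α i₀) * ζ < 1 := by
      have := (hα i₀).1
      have := (hα i₀).2
      nlinarith
    linarith
  -- main contraction bound
  have hcontr : ∀ X : Matrix (Fin n) (Fin R) ℝ, (∀ i, ∑ r, X i r = 1) →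
      normInf (ncpmF α Atil Δ X - Pstar) ≤ ε * normInf (X - Pstar) := by
    intro X hX1
    set K : ℝ := normInf (X - Pstar) with hKdef
    have hKrow : ∀ i, ∑ r, |(X - Pstar) i r| ≤ K := fun i =>
      le_ciSup (f := fun i => ∑ r, |(X - Pstar) i r|) (Finite.bddAbove_range _) i
    have hK0 : 0 ≤ K := by
      obtain ⟨i⟩ := hNn
      exact le_trans (Finset.sum_nonneg fun r _ => abs_nonneg _) (hKrow i)
    have hErow : ∀ i, ∑ s, (X i s - w s) = 0 := by
      intro i
      rw [Finset.sum_sub_distrib, hX1 i, hw1, sub_self]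
    have hrowbound : ∀ i, ∑ r, |(ncpmF α Atil Δ X - Pstar) i r| ≤ ε * K := by
      intro i
      have hαi := hα i
      have b1 : ∑ r, |∑ j, Atil i j * (X j r - w r)| ≤ K := by
        calc ∑ r, |∑ j, Atil i j * (X j r - w r)|
            ≤ ∑ r, ∑ j, Atil i j * |X j r - w r| := by
              refine Finset.sum_le_sum fun r _ => ?_
              refine (Finset.abs_sum_le_sum_abs _ _).trans ?_
              refine Finset.sum_le_sum fun j _ => ?_
              rw [abs_mul, abs_of_nonneg (hA0 i j)]
          _ = ∑ j, Atil i j * ∑ r, |X j r - w r| := by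
              rw [Finset.sum_comm]
              exact Finset.sum_congr rfl fun j _ => (Finset.mul_sum _ _ _).symm
          _ ≤ ∑ j, Atil i j * K := by
              refine Finset.sum_le_sum fun j _ => ?_
              refine mul_le_mul_of_nonneg_left ?_ (hA0 i j)
              have := hKrow j
              simpa [Matrix.sub_apply, hPstar] using this
          _ = K := by rw [← Finset.sum_mul, hA1 i, one_mul]
      have b2 : ∑ r, |∑ s, (X i s - w s) * Δ s r| ≤ ζ * K := by
        refine (key1 _ (hErow i)).trans ?_
        refine mul_le_mul_of_nonneg_left ?_ hζ0
        have := hKrow i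
        simpa [Matrix.sub_apply, hPstar] using this
      calc ∑ r, |(ncpmF α Atil Δ X - Pstar) i r|
          ≤ ∑ r, (α i * |∑ j, Atil i j * (X j r - w r)|
              + (1 - α i) * |∑ s, (X i s - w s) * Δ s r|) := by
            refine Finset.sum_le_sum fun r _ => ?_
            rw [hentry X i r]
            refine (abs_add_le _ _).trans ?_
            rw [abs_mul, abs_mul, abs_of_pos hαi.1, abs_of_pos (show (0:ℝ) < 1 - α i by linarith [hαi.2])]
        _ = α i * ∑ r, |∑ j, Atil i j * (X j r - w r)|
              + (1 - α i) * ∑ r, |∑ s, (X i s - w s) * Δ s r| := by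
            rw [Finset.sum_add_distrib, Finset.mul_sum, Finset.mul_sum]
        _ ≤ α i * K + (1 - α i) * (ζ * K) := by
            refine add_le_add ?_ ?_
            · exact mul_le_mul_of_nonneg_left b1 (le_of_lt hαi.1)
            · exact mul_le_mul_of_nonneg_left b2 (by linarith [hαi.2])
        _ = (α i + (1 - α i) * ζ) * K := by ring
        _ ≤ ε * K := mul_le_mul_of_nonneg_right (hεge i) hK0
    exact ciSup_le hrowbound
  refine ⟨fun X _ hX1 => hcontr X hX1, hε1, ?_⟩
  intro X hX0 hX1 hfix
  have h := hcontr X hX1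
  rw [hfix] at h
  set K : ℝ := normInf (X - Pstar) with hKdef
  have hKrow : ∀ i, ∑ r, |(X - Pstar) i r| ≤ K := fun i =>
    le_ciSup (f := fun i => ∑ r, |(X - Pstar) i r|) (Finite.bddAbove_range _) i
  have hK0 : 0 ≤ K := by
    obtain ⟨i⟩ := hNn
    exact le_trans (Finset.sum_nonneg fun r _ => abs_nonneg _) (hKrow i)
  have hKzero : K = 0 := by nlinarith
  ext i r
  have h1 : ∑ r, |(X - Pstar) i r| ≤ 0 := hKzero ▸ hKrow i
  have h2 : ∀ r' ∈ Finset.univ, (0:ℝ) ≤ |(X - Pstar) i r'| := fun r' _ => abs_nonneg _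
  have h3 : ∑ r, |(X - Pstar) i r| = 0 := le_antisymm h1 (Finset.sum_nonneg h2)
  have h4 := (Finset.sum_eq_zero_iff_of_nonneg h2).mp h3 r (Finset.mem_univ r)
  have h5 : (X - Pstar) i r = 0 := abs_eq_zero.mp h4
  rw [Matrix.sub_apply] at h5
  linarith
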